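/- Let d ∈ 2ℕ, σ ∈ T_d a fixed-point-free involution, and A ⊆ {1,…,⌊d/4⌋}. With β_A defined as multiplication of σ on the right by ∏_{i∈A, a_{4i-1}<a_{4i-2}} (a_{4i-3} a_{4i-1})(a_{4i-2} a_{4i}) (in the canonical ordering of the transpositions of σ), we have β_A(β_A(σ)) = σ. -/

import Mathlib

section helpers

variable {α : Type*} [DecidableEq α]

lemma swap_commute' {a b c e : α} (h1 : a ≠ c) (h2 : a ≠ e) (h3 : b ≠ c) (h4 : b ≠ e) :
    Commute (Equiv.swap a b) (Equiv.swap c e) := by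
  unfold Commute SemiconjBy
  ext x
  simp only [Equiv.Perm.mul_apply, Equiv.swap_apply_def]
  split_ifs <;> simp_all

lemma mul_sq' {G : Type*} [Group G] {s t : G} (h : s * t = t * s) (hs : s * s = 1)
    (ht : t * t = 1) : (s * t) * (s * t) = 1 := by
  rw [mul_assoc, ← mul_assoc t s t, ← h, mul_assoc s t t, ht, mul_one, hs]

lemma perm_prod_fixed (L : List (Equiv.Perm α)) (x : α) (h : ∀ g ∈ L, g x = x) :
    L.prod x = x := by
  induction L with
  | nil => simp
  | cons g t ih =>
    rw [List.prod_cons, Equiv.Perm.mul_apply,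
      ih (fun g hg => h g (List.mem_cons_of_mem _ hg))]
    exact h g (List.mem_cons_self)

lemma perm_prod_map_apply {β : Type*} [DecidableEq β] (f : β → Equiv.Perm α) (x : α) (i : β)
    (l : List β) (hi : i ∈ l) (hnd : l.Nodup)
    (h1 : ∀ j ∈ l, j ≠ i → f j x = x) (h2 : ∀ j ∈ l, j ≠ i → f j (f i x) = f i x) :
    (l.map f).prod x = f i x := by
  induction l with
  | nil => simp at hi
  | cons j t ih =>
    rw [List.map_cons, List.prod_cons, Equiv.Perm.mul_apply]
    rcases eq_or_ne j i with rfl | hne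
    · have hit : j ∉ t := (List.nodup_cons.mp hnd).1
      have : (t.map f).prod x = x := by
        apply perm_prod_fixed
        intro g hg
        obtain ⟨k, hk, rfl⟩ := List.mem_map.mp hg
        exact h1 k (List.mem_cons_of_mem _ hk) (fun h => hit (h ▸ hk))
      rw [this]
    · have hit : i ∈ t := (List.mem_cons.mp hi).resolve_left (fun h => hne h.symm)
      rw [ih hit (List.nodup_cons.mp hnd).2
        (fun k hk hki => h1 k (List.mem_cons_of_mem _ hk) hki)
        (fun k hk hki => h2 k (List.mem_cons_of_mem _ hk) hki)]
      exact h2 j (List.mem_cons_self) hne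

lemma perm_prod_sq (L : List (Equiv.Perm α)) (hc : L.Pairwise Commute)
    (h : ∀ g ∈ L, g * g = 1) : L.prod * L.prod = 1 := by
  induction L with
  | nil => simp
  | cons g t ih =>
    rw [List.prod_cons]
    have hcg : Commute g t.prod :=
      Commute.list_prod_right _ _ (List.pairwise_cons.mp hc).1
    have ht : t.prod * t.prod = 1 :=
      ih (List.pairwise_cons.mp hc).2 (fun g hg => h g (List.mem_cons_of_mem _ hg))
    calc g * t.prod * (g * t.prod) = g * (t.prod * g * t.prod) := by
          rw [mul_assoc, mul_assoc]
      _ = g * (g * t.prod * t.prod) := by rw [hcg.eq]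
      _ = g * g * (t.prod * t.prod) := by group
      _ = 1 := by rw [ht, mul_one, h g (List.mem_cons_self)]

lemma swap_conj' (σ : Equiv.Perm α) (x y : α) :
    σ * Equiv.swap x y * σ⁻¹ = Equiv.swap (σ x) (σ y) := by
  ext z
  simp only [Equiv.Perm.mul_apply]
  by_cases h1 : z = σ x
  · subst h1
    simp [Equiv.swap_apply_left]
  · by_cases h2 : z = σ y
    · subst h2
      simp [Equiv.swap_apply_right]
    · rw [Equiv.swap_apply_of_ne_of_ne h1 h2,
        Equiv.swap_apply_of_ne_of_ne (fun h => h1 ?_) (fun h => h2 ?_)]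
      · simp
      · rw [← h]; simp
      · rw [← h]; simp

end helpers

lemma uniq_order {d : ℕ} (hdeven : d % 2 = 0) (τ : Equiv.Perm (Fin d)) (hτ2 : τ * τ = 1)
    (b c : ℕ → Fin d)
    (hbpair : ∀ i, 1 ≤ i → i ≤ d / 2 → τ (b (2*i - 1)) = b (2*i) ∧ b (2*i - 1) < b (2*i))
    (hbmono : ∀ i j, 1 ≤ i → i < j → j ≤ d / 2 → b (2*i - 1) < b (2*j - 1))
    (hbsurj : ∀ x : Fin d, ∃ i, 1 ≤ i ∧ i ≤ d ∧ b i = x)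
    (hcpair : ∀ i, 1 ≤ i → i ≤ d / 2 → τ (c (2*i - 1)) = c (2*i) ∧ c (2*i - 1) < c (2*i))
    (hcmono : ∀ i j, 1 ≤ i → i < j → j ≤ d / 2 → c (2*i - 1) < c (2*j - 1))
    (hcsurj : ∀ x : Fin d, ∃ i, 1 ≤ i ∧ i ≤ d ∧ c i = x) :
    ∀ j, 1 ≤ j → j ≤ d → b j = c j := by
  have hτ' : ∀ x, τ (τ x) = x := fun x => by
    have : (τ * τ) x = x := by rw [hτ2]; rfl
    simpa using this
  set M : Finset (Fin d) := Finset.univ.filter (fun x => x < τ x) with hM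
  have main : ∀ (e : ℕ → Fin d),
      (∀ i, 1 ≤ i → i ≤ d / 2 → τ (e (2*i - 1)) = e (2*i) ∧ e (2*i - 1) < e (2*i)) →
      (∀ i j, 1 ≤ i → i < j → j ≤ d / 2 → e (2*i - 1) < e (2*j - 1)) →
      (∀ x : Fin d, ∃ i, 1 ≤ i ∧ i ≤ d ∧ e i = x) →
      (StrictMono (fun k : Fin (d/2) => e (2*(k:ℕ)+1)) ∧
        (∀ k : Fin (d/2), e (2*(k:ℕ)+1) ∈ M) ∧
        ∀ x ∈ M, ∃ k : Fin (d/2), e (2*(k:ℕ)+1) = x) := by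
    intro e hp hm hs
    refine ⟨?_, ?_, ?_⟩
    · intro k l hkl
      have hl := l.isLt
      have hkl' : (k:ℕ) < (l:ℕ) := hkl
      have := hm ((k:ℕ)+1) ((l:ℕ)+1) (by omega) (by omega) (by omega)
      rw [show 2*((k:ℕ)+1)-1 = 2*(k:ℕ)+1 by omega,
        show 2*((l:ℕ)+1)-1 = 2*(l:ℕ)+1 by omega] at this
      exact this
    · intro k
      have hk := k.isLt
      have := hp ((k:ℕ)+1) (by omega) (by omega)
      rw [show 2*((k:ℕ)+1)-1 = 2*(k:ℕ)+1 by omega] at this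
      rw [hM, Finset.mem_filter]
      refine ⟨Finset.mem_univ _, ?_⟩
      rw [this.1]
      exact this.2
    · intro x hx
      have hxlt : x < τ x := by rw [hM, Finset.mem_filter] at hx; exact hx.2
      obtain ⟨i, h1, h2, rfl⟩ := hs x
      rcases Nat.even_or_odd i with ⟨m, hm'⟩ | ⟨m, hm'⟩
      · have hm1 : 1 ≤ m := by omega
        have hm2 : m ≤ d/2 := by omega
        have hp' := hp m hm1 hm2
        have hii : i = 2*m := by omega
        subst hii
        have h3 : τ (e (2*m)) = e (2*m-1) := by rw [← hp'.1, hτ']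
        rw [h3] at hxlt
        exact absurd (hxlt.trans hp'.2) (lt_irrefl _)
      · have hm2 : m + 1 ≤ d/2 := by omega
        refine ⟨⟨m, by omega⟩, ?_⟩
        exact congrArg e (by show 2*m+1 = i; omega)
  obtain ⟨hbm, hbmem, hbsur⟩ := main b hbpair hbmono hbsurj
  obtain ⟨hcm, hcmem, hcsur⟩ := main c hcpair hcmono hcsurj
  have hcard : M.card = d/2 := by
    have himg : Finset.image (fun k : Fin (d/2) => b (2*(k:ℕ)+1)) Finset.univ = M := by
      apply Finset.Subset.antisymm
      · intro x hx
        obtain ⟨k, _, rfl⟩ := Finset.mem_image.mp hx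
        exact hbmem k
      · intro x hx
        obtain ⟨k, hk⟩ := hbsur x hx
        exact Finset.mem_image.mpr ⟨k, Finset.mem_univ _, hk⟩
    rw [← himg, Finset.card_image_of_injective _ hbm.injective, Finset.card_univ,
      Fintype.card_fin]
  have hbo := Finset.orderEmbOfFin_unique hcard hbmem hbm
  have hco := Finset.orderEmbOfFin_unique hcard hcmem hcm
  have hodd : ∀ m, 1 ≤ m → m ≤ d/2 → b (2*m-1) = c (2*m-1) := by
    intro m h1 h2
    obtain ⟨k, hk⟩ : ∃ k : Fin (d/2), (k:ℕ) = m - 1 := ⟨⟨m-1, by omega⟩, rfl⟩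
    have := congrFun (hbo.trans hco.symm) k
    rw [hk] at this
    rwa [show 2*(m-1)+1 = 2*m-1 by omega] at this
  intro j hj1 hj2
  rcases Nat.even_or_odd j with ⟨m, hm'⟩ | ⟨m, hm'⟩
  · have hm1 : 1 ≤ m := by omega
    have hm2 : m ≤ d / 2 := by omega
    have hb' := hbpair m hm1 hm2
    have hc' := hcpair m hm1 hm2
    rw [show j = 2*m by omega, ← hb'.1, ← hc'.1, hodd m hm1 hm2]
  · rw [show j = 2*(m+1)-1 by omega]
    exact hodd (m+1) (by omega) (by omega)

set_option maxHeartbeats 1600000 in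
theorem stmt_8 (d : ℕ) (hdeven : d % 2 = 0) (hdpos : 0 < d)
    (σ : Equiv.Perm (Fin d)) (hinv : σ * σ = 1) (hfpf : ∀ x, σ x ≠ x)
    (a : ℕ → Fin d)
    (hapair : ∀ i, 1 ≤ i → i ≤ d / 2 → σ (a (2*i - 1)) = a (2*i) ∧ a (2*i - 1) < a (2*i))
    (hamono : ∀ i j, 1 ≤ i → i < j → j ≤ d / 2 → a (2*i - 1) < a (2*j - 1))
    (hasurj : ∀ x : Fin d, ∃ i, 1 ≤ i ∧ i ≤ d ∧ a i = x)
    (A : Finset ℕ) (hA : A ⊆ Finset.Icc 1 (d / 4))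
    (τ : Equiv.Perm (Fin d))
    (hτ : τ = σ * (((A.filter fun i => a (4*i - 1) < a (4*i - 2)).sort (· ≤ ·)).map
        (fun i => Equiv.swap (a (4*i - 3)) (a (4*i - 1))
          * Equiv.swap (a (4*i - 2)) (a (4*i)))).prod)
    (b : ℕ → Fin d)
    (hbpair : ∀ i, 1 ≤ i → i ≤ d / 2 → τ (b (2*i - 1)) = b (2*i) ∧ b (2*i - 1) < b (2*i))
    (hbmono : ∀ i j, 1 ≤ i → i < j → j ≤ d / 2 → b (2*i - 1) < b (2*j - 1))
    (hbsurj : ∀ x : Fin d, ∃ i, 1 ≤ i ∧ i ≤ d ∧ b i = x) :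
    τ * (((A.filter fun i => b (4*i - 1) < b (4*i - 2)).sort (· ≤ ·)).map
        (fun i => Equiv.swap (b (4*i - 3)) (b (4*i - 1))
          * Equiv.swap (b (4*i - 2)) (b (4*i)))).prod = σ := by
  classical
  have hσ2 : ∀ x, σ (σ x) = x := fun x => by
    have : (σ * σ) x = x := by rw [hinv]; rfl
    simpa using this
  set S : Finset ℕ := A.filter (fun i => a (4*i - 1) < a (4*i - 2)) with hS
  set l : List ℕ := S.sort (· ≤ ·) with hl
  set f : ℕ → Equiv.Perm (Fin d) := fun i => Equiv.swap (a (4*i - 3)) (a (4*i - 1))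
          * Equiv.swap (a (4*i - 2)) (a (4*i)) with hf
  have hτP : τ = σ * (l.map f).prod := hτ
  have hnd : l.Nodup := S.sort_nodup (· ≤ ·)
  have hSmem : ∀ i ∈ S, 1 ≤ i ∧ i ≤ d / 4 ∧ a (4*i - 1) < a (4*i - 2) := by
    intro i hi
    rw [hS, Finset.mem_filter] at hi
    have h2 := Finset.mem_Icc.mp (hA hi.1)
    exact ⟨h2.1, h2.2, hi.2⟩
  -- basic facts about blocks
  have hblk : ∀ i, 1 ≤ i → i ≤ d / 4 →
      σ (a (4*i-3)) = a (4*i-2) ∧ σ (a (4*i-1)) = a (4*i) ∧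
      a (4*i-3) < a (4*i-2) ∧ a (4*i-1) < a (4*i) ∧ a (4*i-3) < a (4*i-1) := by
    intro i h1 h2
    have e1 := hapair (2*i-1) (by omega) (by omega)
    have e2 := hapair (2*i) (by omega) (by omega)
    have e3 := hamono (2*i-1) (2*i) (by omega) (by omega) (by omega)
    simp only [show 2*(2*i-1)-1 = 4*i-3 from by omega, show 4*i-2-1 = 4*i-3 from by omega, show 2*(2*i-1) = 4*i-2 from by omega,
      show 2*(2*i)-1 = 4*i-1 from by omega, show 2*(2*i) = 4*i from by omega] at e1 e2 e3
    exact ⟨e1.1, e2.1, e1.2, e2.2, e3⟩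
  -- disjointness of distinct pairs
  have hpd : ∀ k m, 1 ≤ k → 1 ≤ m → k ≤ d/2 → m ≤ d/2 → k ≠ m →
      a (2*k-1) ≠ a (2*m-1) ∧ a (2*k-1) ≠ a (2*m) ∧
      a (2*k) ≠ a (2*m-1) ∧ a (2*k) ≠ a (2*m) := by
    have hσa : ∀ m, 1 ≤ m → m ≤ d/2 → σ (a (2*m)) = a (2*m-1) := by
      intro m h1 h2
      rw [← (hapair m h1 h2).1, hσ2]
    have key : ∀ k m, 1 ≤ k → k < m → m ≤ d/2 →
        a (2*k-1) ≠ a (2*m-1) ∧ a (2*k-1) ≠ a (2*m) ∧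
        a (2*k) ≠ a (2*m-1) ∧ a (2*k) ≠ a (2*m) := by
      intro k m hk hkm hm
      have pk := hapair k hk (by omega)
      have pm := hapair m (by omega) hm
      have mo := hamono k m hk hkm hm
      refine ⟨ne_of_lt mo, ?_, ?_, ?_⟩
      · intro h
        have h2 : a (2*k) = a (2*m-1) := by
          rw [← pk.1, h, hσa m (by omega) hm]
        have := (pm.2.trans_eq (h.symm)).trans (pk.2.trans_eq h2)
        exact absurd this (lt_irrefl _)
      · intro h
        have h2 : a (2*k-1) = a (2*m) := by
          rw [← hσ2 (a (2*k-1)), pk.1, h, pm.1]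
        have := (pk.2.trans_eq h).trans (pm.2.trans_eq h2.symm)
        exact absurd this (lt_irrefl _)
      · intro h
        have h2 : a (2*k-1) = a (2*m-1) := by
          rw [← hσ2 (a (2*k-1)), pk.1, h, hσa m (by omega) hm]
        exact absurd h2 (ne_of_lt mo)
    intro k m hk hm hk2 hm2 hne
    rcases lt_or_gt_of_ne hne with h | h
    · exact key k m hk h hm2
    · obtain ⟨n1, n2, n3, n4⟩ := key m k hm h hk2
      exact ⟨n1.symm, n3.symm, n2.symm, n4.symm⟩
  -- distinctness within a block
  have hdist : ∀ i, 1 ≤ i → i ≤ d/4 →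
      a (4*i-3) ≠ a (4*i-2) ∧ a (4*i-3) ≠ a (4*i-1) ∧ a (4*i-3) ≠ a (4*i) ∧
      a (4*i-2) ≠ a (4*i-1) ∧ a (4*i-2) ≠ a (4*i) ∧ a (4*i-1) ≠ a (4*i) := by
    intro i h1 h2
    obtain ⟨_, _, l1, l2, _⟩ := hblk i h1 h2
    have := hpd (2*i-1) (2*i) (by omega) (by omega) (by omega) (by omega) (by omega)
    simp only [show 2*(2*i-1)-1 = 4*i-3 from by omega, show 4*i-2-1 = 4*i-3 from by omega, show 2*(2*i-1) = 4*i-2 from by omega,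
      show 2*(2*i)-1 = 4*i-1 from by omega, show 2*(2*i) = 4*i from by omega] at this
    exact ⟨ne_of_lt l1, this.1, this.2.1, this.2.2.1, this.2.2.2, ne_of_lt l2⟩
  -- f j fixes points of other pairs
  have hfix : ∀ j, 1 ≤ j → j ≤ d/4 → ∀ k, 1 ≤ k → k ≤ d/2 → k ≠ 2*j-1 → k ≠ 2*j →
      f j (a (2*k-1)) = a (2*k-1) ∧ f j (a (2*k)) = a (2*k) := by
    intro j hj1 hj2 k hk1 hk2 hne1 hne2
    have d1 := hpd k (2*j-1) hk1 (by omega) hk2 (by omega) hne1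
    have d2 := hpd k (2*j) hk1 (by omega) hk2 (by omega) hne2
    simp only [show 2*(2*j-1)-1 = 4*j-3 from by omega, show 4*j-2-1 = 4*j-3 from by omega, show 2*(2*j-1) = 4*j-2 from by omega]
      at d1
    simp only [show 2*(2*j)-1 = 4*j-1 from by omega, show 2*(2*j) = 4*j from by omega] at d2
    simp only [hf, Equiv.Perm.mul_apply]
    constructor
    · rw [Equiv.swap_apply_of_ne_of_ne d1.2.1 d2.2.1,
        Equiv.swap_apply_of_ne_of_ne d1.1 d2.1]
    · rw [Equiv.swap_apply_of_ne_of_ne d1.2.2.2 d2.2.2.2,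
        Equiv.swap_apply_of_ne_of_ne d1.2.2.1 d2.2.2.1]
  -- action of f i within its block
  have hmove : ∀ i, 1 ≤ i → i ≤ d/4 →
      f i (a (4*i-3)) = a (4*i-1) ∧ f i (a (4*i-1)) = a (4*i-3) ∧
      f i (a (4*i-2)) = a (4*i) ∧ f i (a (4*i)) = a (4*i-2) := by
    intro i h1 h2
    obtain ⟨n12, n13, n14, n23, n24, n34⟩ := hdist i h1 h2
    simp only [hf, Equiv.Perm.mul_apply]
    refine ⟨?_, ?_, ?_, ?_⟩
    · rw [Equiv.swap_apply_of_ne_of_ne n12 n14, Equiv.swap_apply_left]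
    · rw [Equiv.swap_apply_of_ne_of_ne (Ne.symm n23) n34, Equiv.swap_apply_right]
    · rw [Equiv.swap_apply_left, Equiv.swap_apply_of_ne_of_ne (Ne.symm n14) (Ne.symm n34)]
    · rw [Equiv.swap_apply_right, Equiv.swap_apply_of_ne_of_ne (Ne.symm n12) n23]
  -- the product fixes untouched pairs
  have hPfix : ∀ k, 1 ≤ k → k ≤ d/2 → (∀ j ∈ S, k ≠ 2*j-1 ∧ k ≠ 2*j) →
      (l.map f).prod (a (2*k-1)) = a (2*k-1) ∧ (l.map f).prod (a (2*k)) = a (2*k) := by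
    intro k hk1 hk2 hk
    constructor
    · apply perm_prod_fixed
      intro g hg
      obtain ⟨j, hj, rfl⟩ := List.mem_map.mp hg
      have hjS : j ∈ S := (Finset.mem_sort _).mp hj
      obtain ⟨hj1, hj2, _⟩ := hSmem j hjS
      exact (hfix j hj1 hj2 k hk1 hk2 (hk j hjS).1 (hk j hjS).2).1
    · apply perm_prod_fixed
      intro g hg
      obtain ⟨j, hj, rfl⟩ := List.mem_map.mp hg
      have hjS : j ∈ S := (Finset.mem_sort _).mp hj
      obtain ⟨hj1, hj2, _⟩ := hSmem j hjS
      exact (hfix j hj1 hj2 k hk1 hk2 (hk j hjS).1 (hk j hjS).2).2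
  -- action of the product within a selected block
  have hPmove : ∀ i ∈ S,
      (l.map f).prod (a (4*i-3)) = a (4*i-1) ∧ (l.map f).prod (a (4*i-1)) = a (4*i-3) ∧
      (l.map f).prod (a (4*i-2)) = a (4*i) ∧ (l.map f).prod (a (4*i)) = a (4*i-2) := by
    intro i hiS
    obtain ⟨hi1, hi2, _⟩ := hSmem i hiS
    have hil : i ∈ l := (Finset.mem_sort _).mpr hiS
    have hm := hmove i hi1 hi2
    have hother : ∀ j ∈ l, j ≠ i → f j (a (4*i-3)) = a (4*i-3) ∧ f j (a (4*i-2)) = a (4*i-2)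
        ∧ f j (a (4*i-1)) = a (4*i-1) ∧ f j (a (4*i)) = a (4*i) := by
      intro j hj hji
      have hjS := (Finset.mem_sort _).mp hj
      obtain ⟨hj1, hj2, _⟩ := hSmem j hjS
      have e1 := hfix j hj1 hj2 (2*i-1) (by omega) (by omega) (by omega) (by omega)
      have e2 := hfix j hj1 hj2 (2*i) (by omega) (by omega) (by omega) (by omega)
      simp only [show 2*(2*i-1)-1 = 4*i-3 from by omega, show 4*i-2-1 = 4*i-3 from by omega, show 2*(2*i-1) = 4*i-2 from by omega]
        at e1
      simp only [show 2*(2*i)-1 = 4*i-1 from by omega, show 2*(2*i) = 4*i from by omega] at e2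
      exact ⟨e1.1, e1.2, e2.1, e2.2⟩
    refine ⟨?_, ?_, ?_, ?_⟩
    · rw [perm_prod_map_apply f _ i l hil hnd (fun j hj hji => (hother j hj hji).1)
        (fun j hj hji => by rw [hm.1]; exact (hother j hj hji).2.2.1)]
      exact hm.1
    · rw [perm_prod_map_apply f _ i l hil hnd (fun j hj hji => (hother j hj hji).2.2.1)
        (fun j hj hji => by rw [hm.2.1]; exact (hother j hj hji).1)]
      exact hm.2.1
    · rw [perm_prod_map_apply f _ i l hil hnd (fun j hj hji => (hother j hj hji).2.1)
        (fun j hj hji => by rw [hm.2.2.1]; exact (hother j hj hji).2.2.2)]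
      exact hm.2.2.1
    · rw [perm_prod_map_apply f _ i l hil hnd (fun j hj hji => (hother j hj hji).2.2.2)
        (fun j hj hji => by rw [hm.2.2.2]; exact (hother j hj hji).2.1)]
      exact hm.2.2.2
  have hτapp : ∀ x, τ x = σ ((l.map f).prod x) := fun x => by rw [hτP]; rfl
  have hτblk : ∀ i ∈ S, τ (a (4*i-3)) = a (4*i) ∧ τ (a (4*i-1)) = a (4*i-2) := by
    intro i hi
    obtain ⟨h1, h2, _⟩ := hSmem i hi
    obtain ⟨e1, e2, _⟩ := hblk i h1 h2
    obtain ⟨p1, p3, _, _⟩ := hPmove i hi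
    exact ⟨by rw [hτapp, p1, e2], by rw [hτapp, p3, e1]⟩
  have hτfix : ∀ k, 1 ≤ k → k ≤ d/2 → (∀ j ∈ S, k ≠ 2*j-1 ∧ k ≠ 2*j) →
      τ (a (2*k-1)) = a (2*k) := by
    intro k hk1 hk2 hk
    rw [hτapp, (hPfix k hk1 hk2 hk).1, (hapair k hk1 hk2).1]
  -- commutation of the factors
  have hcomm : ∀ i ∈ S, ∀ j ∈ S, i ≠ j → Commute (f i) (f j) := by
    intro i hi j hj hij
    obtain ⟨hi1, hi2, _⟩ := hSmem i hi
    obtain ⟨hj1, hj2, _⟩ := hSmem j hj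
    have e11 := hpd (2*i-1) (2*j-1) (by omega) (by omega) (by omega) (by omega) (by omega)
    have e12 := hpd (2*i-1) (2*j) (by omega) (by omega) (by omega) (by omega) (by omega)
    have e21 := hpd (2*i) (2*j-1) (by omega) (by omega) (by omega) (by omega) (by omega)
    have e22 := hpd (2*i) (2*j) (by omega) (by omega) (by omega) (by omega) (by omega)
    simp only [show 2*(2*i-1)-1 = 4*i-3 from by omega, show 4*i-2-1 = 4*i-3 from by omega, show 2*(2*i-1) = 4*i-2 from by omega,
      show 2*(2*i)-1 = 4*i-1 from by omega, show 2*(2*i) = 4*i from by omega,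
      show 2*(2*j-1)-1 = 4*j-3 from by omega, show 4*j-2-1 = 4*j-3 from by omega, show 2*(2*j-1) = 4*j-2 from by omega,
      show 2*(2*j)-1 = 4*j-1 from by omega, show 2*(2*j) = 4*j from by omega]
      at e11 e12 e21 e22
    simp only [hf]
    exact Commute.mul_left
      (Commute.mul_right (swap_commute' e11.1 e12.1 e21.1 e22.1)
        (swap_commute' e11.2.1 e12.2.1 e21.2.1 e22.2.1))
      (Commute.mul_right (swap_commute' e11.2.2.1 e12.2.2.1 e21.2.2.1 e22.2.2.1)
        (swap_commute' e11.2.2.2 e12.2.2.2 e21.2.2.2 e22.2.2.2))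
  have hpw : (l.map f).Pairwise Commute := by
    refine List.pairwise_map.mpr (hnd.imp_of_mem ?_)
    intro x y hx hy hxy
    exact hcomm x ((Finset.mem_sort _).mp hx) y ((Finset.mem_sort _).mp hy) hxy
  have hfsq : ∀ i ∈ S, f i * f i = 1 := by
    intro i hi
    obtain ⟨h1, h2, _⟩ := hSmem i hi
    obtain ⟨n12, n13, n14, n23, n24, n34⟩ := hdist i h1 h2
    simp only [hf]
    exact mul_sq' (swap_commute' n12 n14 (Ne.symm n23) n34).eq
      (Equiv.swap_mul_self _ _) (Equiv.swap_mul_self _ _)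
  have hP2 : (l.map f).prod * (l.map f).prod = 1 := by
    apply perm_prod_sq _ hpw
    intro g hg
    obtain ⟨i, hi, rfl⟩ := List.mem_map.mp hg
    exact hfsq i ((Finset.mem_sort _).mp hi)
  -- σ commutes with the product
  have hconj : σ * (l.map f).prod = (l.map f).prod * σ := by
    have key : σ * (l.map f).prod * σ⁻¹ = (l.map f).prod := by
      have h1 : σ * (l.map f).prod * σ⁻¹ = (MulAut.conj σ) (l.map f).prod := by
        rw [MulAut.conj_apply]
      rw [h1, map_list_prod, List.map_map]
      congr 1
      apply List.map_congr_left
      intro i hi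
      have hiS := (Finset.mem_sort _).mp hi
      obtain ⟨h1', h2', _⟩ := hSmem i hiS
      obtain ⟨e1, e2, _, _, _⟩ := hblk i h1' h2'
      obtain ⟨n12, n13, n14, n23, n24, n34⟩ := hdist i h1' h2'
      have e1' : σ (a (4*i-2)) = a (4*i-3) := by rw [← e1, hσ2]
      have e2' : σ (a (4*i)) = a (4*i-1) := by rw [← e2, hσ2]
      simp only [Function.comp_apply, hf, map_mul, MulAut.conj_apply]
      rw [swap_conj', swap_conj', e1, e2, e1', e2']
      exact ((swap_commute' n12 n14 (Ne.symm n23) n34).eq).symm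
    calc σ * (l.map f).prod = (σ * (l.map f).prod * σ⁻¹) * σ := by group
      _ = (l.map f).prod * σ := by rw [key]
  have hτ2 : τ * τ = 1 := by
    rw [hτP]
    exact mul_sq' hconj hinv hP2
  -- the explicit canonical listing of τ
  set c : ℕ → Fin d := fun j => if j % 4 = 2 ∧ (j+2)/4 ∈ S then a (j+2)
      else if j % 4 = 0 ∧ j/4 ∈ S then a (j-2) else a j with hcdef
  have hcodd : ∀ j, j % 2 = 1 → c j = a j := by
    intro j hj
    simp only [hcdef]
    rw [if_neg (by rintro ⟨h1, -⟩; omega), if_neg (by rintro ⟨h1, -⟩; omega)]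
  have hc42 : ∀ i ∈ S, c (4*i-2) = a (4*i) := by
    intro i hi
    obtain ⟨h1, h2, _⟩ := hSmem i hi
    have hq : (4*i-2+2)/4 = i := by omega
    simp only [hcdef]
    rw [if_pos ⟨by omega, by rw [hq]; exact hi⟩]
    exact congrArg a (by omega)
  have hc4 : ∀ i ∈ S, c (4*i) = a (4*i-2) := by
    intro i hi
    obtain ⟨h1, h2, _⟩ := hSmem i hi
    have hq : 4*i/4 = i := by omega
    simp only [hcdef]
    rw [if_neg (by rintro ⟨h1', -⟩; omega), if_pos ⟨by omega, by rw [hq]; exact hi⟩]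
  have hcev1 : ∀ i, 1 ≤ i → i ∉ S → c (4*i-2) = a (4*i-2) := by
    intro i h1 hi
    simp only [hcdef]
    rw [if_neg ?_, if_neg (by rintro ⟨h1', -⟩; omega)]
    rintro ⟨-, h2⟩
    rw [show (4*i-2+2)/4 = i from by omega] at h2
    exact hi h2
  have hcev2 : ∀ i, 1 ≤ i → i ∉ S → c (4*i) = a (4*i) := by
    intro i h1 hi
    simp only [hcdef]
    rw [if_neg (by rintro ⟨h1', -⟩; omega), if_neg ?_]
    rintro ⟨-, h2⟩
    rw [show 4*i/4 = i from by omega] at h2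
    exact hi h2
  have hcpair : ∀ k, 1 ≤ k → k ≤ d / 2 → τ (c (2*k - 1)) = c (2*k) ∧ c (2*k - 1) < c (2*k) := by
    intro k hk1 hk2
    rw [hcodd (2*k-1) (by omega)]
    rcases Nat.even_or_odd k with ⟨m, hm⟩ | ⟨m, hm⟩
    · -- k = 2m
      have hkm : k = 2*m := by omega
      subst hkm
      rw [show 2*(2*m)-1 = 4*m-1 from by omega, show 2*(2*m) = 4*m from by omega]
      have hm1 : 1 ≤ m := by omega
      have hm4 : m ≤ d/4 := by omega
      by_cases hmS : m ∈ S
      · rw [hc4 m hmS]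
        exact ⟨(hτblk m hmS).2, (hSmem m hmS).2.2⟩
      · rw [hcev2 m hm1 hmS]
        constructor
        · have := hτfix (2*m) (by omega) (by omega) ?_
          · rwa [show 2*(2*m)-1 = 4*m-1 from by omega, show 2*(2*m) = 4*m from by omega] at this
          · intro j hj
            constructor
            · omega
            · intro h
              have : j = m := by omega
              exact hmS (this ▸ hj)
        · exact (hblk m hm1 hm4).2.2.2.1
    · -- k = 2m+1 = 2(m+1)-1
      have hkm : k = 2*m+1 := hm
      subst hkm
      rw [show 2*(2*m+1)-1 = 4*(m+1)-3 from by omega,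
        show 2*(2*m+1) = 4*(m+1)-2 from by omega]
      by_cases hmS : (m+1) ∈ S
      · rw [hc42 (m+1) hmS]
        refine ⟨(hτblk (m+1) hmS).1, ?_⟩
        obtain ⟨h1', h2', _⟩ := hSmem (m+1) hmS
        obtain ⟨_, _, _, l2, l3⟩ := hblk (m+1) h1' h2'
        exact l3.trans l2
      · rw [hcev1 (m+1) (by omega) hmS]
        constructor
        · have := hτfix (2*(m+1)-1) (by omega) (by omega) ?_
          · rwa [show 2*(2*(m+1)-1)-1 = 4*(m+1)-3 from by omega,
              show 2*(2*(m+1)-1) = 4*(m+1)-2 from by omega] at this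
          · intro j hj
            refine ⟨?_, by omega⟩
            intro h
            have hj1 := (hSmem j hj).1
            have hjm : j = m+1 := by omega
            exact hmS (hjm ▸ hj)
        · have := (hapair (2*m+1) (by omega) (by omega)).2
          rwa [show 2*(2*m+1)-1 = 4*(m+1)-3 from by omega,
            show 2*(2*m+1) = 4*(m+1)-2 from by omega] at this
  have hcmono : ∀ i j, 1 ≤ i → i < j → j ≤ d / 2 → c (2*i - 1) < c (2*j - 1) := by
    intro i j h1 h2 h3
    rw [hcodd (2*i-1) (by omega), hcodd (2*j-1) (by omega)]
    exact hamono i j h1 h2 h3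
  have hcsurj : ∀ x : Fin d, ∃ i, 1 ≤ i ∧ i ≤ d ∧ c i = x := by
    intro x
    obtain ⟨i, h1, h2, rfl⟩ := hasurj x
    by_cases hc1 : i % 4 = 2 ∧ (i+2)/4 ∈ S
    · obtain ⟨hm1, hm2, _⟩ := hSmem _ hc1.2
      refine ⟨i+2, by omega, by omega, ?_⟩
      have hm : i + 2 = 4 * ((i+2)/4) := by omega
      rw [hm, hc4 _ hc1.2]
      exact congrArg a (by omega)
    · by_cases hc2 : i % 4 = 0 ∧ i/4 ∈ S
      · obtain ⟨hm1, hm2, _⟩ := hSmem _ hc2.2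
        refine ⟨i-2, by omega, by omega, ?_⟩
        have hm : i - 2 = 4*(i/4) - 2 := by omega
        rw [hm, hc42 _ hc2.2]
        exact congrArg a (by omega)
      · refine ⟨i, h1, h2, ?_⟩
        simp only [hcdef]
        rw [if_neg hc1, if_neg hc2]
  have buniq : ∀ j, 1 ≤ j → j ≤ d → b j = c j :=
    uniq_order hdeven τ hτ2 b c hbpair hbmono hbsurj hcpair hcmono hcsurj
  have hfilter : (A.filter fun i => b (4*i - 1) < b (4*i - 2)) = S := by
    rw [hS]
    apply Finset.filter_congr
    intro i hi
    have hi' := Finset.mem_Icc.mp (hA hi)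
    have e1 : b (4*i-1) = c (4*i-1) := buniq _ (by omega) (by omega)
    have e2 : b (4*i-2) = c (4*i-2) := buniq _ (by omega) (by omega)
    rw [e1, e2, hcodd (4*i-1) (by omega)]
    by_cases hiS : i ∈ S
    · obtain ⟨h1, h2, h3⟩ := hSmem i hiS
      rw [hc42 i hiS]
      exact iff_of_true (hblk i h1 h2).2.2.2.1 h3
    · rw [hcev1 i (by omega) hiS]
  rw [hfilter, ← hl]
  have hmapeq : (l.map fun i => Equiv.swap (b (4*i - 3)) (b (4*i - 1))
      * Equiv.swap (b (4*i - 2)) (b (4*i))) = l.map f := by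
    apply List.map_congr_left
    intro i hi
    have hiS := (Finset.mem_sort _).mp hi
    obtain ⟨h1, h2, _⟩ := hSmem i hiS
    rw [buniq (4*i-3) (by omega) (by omega), buniq (4*i-1) (by omega) (by omega),
      buniq (4*i-2) (by omega) (by omega), buniq (4*i) (by omega) (by omega),
      hcodd (4*i-3) (by omega), hcodd (4*i-1) (by omega), hc42 i hiS, hc4 i hiS]
    simp only [hf]
    rw [Equiv.swap_comm (a (4*i)) (a (4*i-2))]
  rw [hmapeq, hτP, mul_assoc, hP2, mul_one]
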